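/- Suppose G is a generator of T (every object X with Hom(G, X⟦p⟧) = 0 for all p ∈ ℤ is zero). Let X be an object of T and G₀ an object lying in add(Σ•G). If there exists a graded morphism (g_p)_{p∈ℤ} from G₀ to X over G with g_p bijective for every p ∈ ℤ, then X is isomorphic to G₀ in T. -/

import Mathlib

/-!
Statement 7. If `G` is a generator of `T`, `G₀` lies in `add(Σ• G)` and there is a graded
morphism `(g_p)` from `G₀` to `X` over `G` with every `g_p` bijective, then `X ≅ G₀`.
-/


open CategoryTheory CategoryTheory.Limits CategoryTheory.Pretriangulated

variable {k : Type*} [CommRing k] {C : Type*} [Category C] [Preadditive C]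
  [CategoryTheory.Linear k C] [HasZeroObject C] [HasShift C ℤ]
  [∀ n : ℤ, (shiftFunctor C n).Additive] [Pretriangulated C] [HasFiniteBiproducts C]

/-- An object `X` lies in `add(Σ• G)` if it is a direct summand of a finite direct sum
of shifts of `G`. -/
def InAddShifts (G X : C) : Prop :=
  ∃ (n : ℕ) (ps : Fin n → ℤ) (r : X ⟶ ⨁ fun i : Fin n => G⟦ps i⟧)
    (s : (⨁ fun i : Fin n => G⟦ps i⟧) ⟶ X), r ≫ s = 𝟙 X

/-- `(g_p)_{p ∈ ℤ}` is a graded morphism from `X` to `Y` over `G`: a family of `k`-linear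
maps `Hom(G, X⟦p⟧) → Hom(G, Y⟦p⟧)` compatible with the right action of the graded
endomorphism algebra of `G`. -/
def IsGradedHomOver (G X Y : C) (g : ∀ p : ℤ, (G ⟶ X⟦p⟧) →ₗ[k] (G ⟶ Y⟦p⟧)) : Prop :=
  ∀ (p r : ℤ) (a : G ⟶ G⟦r⟧) (u : G ⟶ X⟦p⟧),
    g (p + r) (a ≫ u⟦r⟧' ≫ (shiftFunctorAdd C p r).inv.app X) =
      a ≫ (g p u)⟦r⟧' ≫ (shiftFunctorAdd C p r).inv.app Y

section AuxShift

set_option linter.unusedSectionVars false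

lemma aux_add'_inv_app (i j kk : ℤ) (h : i + j = kk) (Y : C) :
    (shiftFunctorAdd' C i j kk h).inv.app Y =
      (shiftFunctorAdd C i j).inv.app Y ≫ eqToHom (by rw [h]) := by
  simp [shiftFunctorAdd', eqToIso]

lemma aux_coh (Y : C) (q m : ℤ) :
    (shiftFunctorAdd C q m).inv.app (Y⟦-q⟧) ≫
      (shiftFunctorAdd' C (-q) (q + m) m (by ring)).inv.app Y =
    ((shiftFunctorCompIsoId C (-q) q (neg_add_cancel q)).hom.app Y)⟦m⟧' := by
  rw [← shiftFunctorAdd'_eq_shiftFunctorAdd,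
    ← shiftFunctorAdd'_assoc_inv_app (-q) q m 0 (q + m) m (neg_add_cancel q) rfl (by ring) Y,
    shiftFunctorAdd'_zero_add_inv_app, ← Functor.map_comp]
  simp [shiftFunctorCompIsoId]

lemma aux_real (q : ℤ) {A Y : C} (h : A⟦q⟧ ⟶ Y) :
    (((shiftFunctorCompIsoId C q (-q) (add_neg_cancel q)).inv.app A ≫ h⟦-q⟧')⟦q⟧') ≫
      (shiftFunctorCompIsoId C (-q) q (neg_add_cancel q)).hom.app Y = h := by
  rw [Functor.map_comp, Category.assoc]
  have := (shiftFunctorCompIsoId C (-q) q (neg_add_cancel q)).hom.naturality h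
  dsimp at this
  rw [this, shift_shiftFunctorCompIsoId_add_neg_cancel_inv_app]
  simp

lemma aux_key (q m : ℤ) {G Y : C} (w : G ⟶ Y⟦-q⟧) (b : G ⟶ (G⟦q⟧)⟦m⟧) :
    (b ≫ (shiftFunctorAdd C q m).inv.app G) ≫ w⟦q + m⟧' ≫
        (shiftFunctorAdd' C (-q) (q + m) m (by ring)).inv.app Y =
      b ≫ (w⟦q⟧' ≫ (shiftFunctorCompIsoId C (-q) q (neg_add_cancel q)).hom.app Y)⟦m⟧' := by
  have nat := (shiftFunctorAdd C q m).inv.naturality w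
  dsimp at nat
  rw [Category.assoc, ← Category.assoc ((shiftFunctorAdd C q m).inv.app G), ← nat,
    Category.assoc, aux_coh, Functor.map_comp]

lemma aux_cast {G Y X : C} (f : ∀ p : ℤ, (G ⟶ Y⟦p⟧) → (G ⟶ X⟦p⟧)) (p p' : ℤ)
    (h : p = p') (u : G ⟶ Y⟦p⟧) :
    f p' (u ≫ eqToHom (by rw [h])) = f p u ≫ eqToHom (by rw [h]) := by
  subst h; simp

lemma aux_per (G G₀ X : C) (g : ∀ p : ℤ, (G ⟶ G₀⟦p⟧) →ₗ[k] (G ⟶ X⟦p⟧))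
    (hg : IsGradedHomOver G G₀ X g) (q m : ℤ) (sᵢ : G⟦q⟧ ⟶ G₀) (b : G ⟶ (G⟦q⟧)⟦m⟧) :
    g m (b ≫ sᵢ⟦m⟧') =
      b ≫ ((g (-q) ((shiftFunctorCompIsoId C q (-q) (add_neg_cancel q)).inv.app G ≫
        sᵢ⟦-q⟧'))⟦q⟧' ≫ (shiftFunctorCompIsoId C (-q) q (neg_add_cancel q)).hom.app X)⟦m⟧' := by
  set u : G ⟶ G₀⟦-q⟧ := (shiftFunctorCompIsoId C q (-q) (add_neg_cancel q)).inv.app G ≫ sᵢ⟦-q⟧'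
    with hu
  have E0 : (b ≫ (shiftFunctorAdd C q m).inv.app G) ≫ u⟦q + m⟧' ≫
      (shiftFunctorAdd' C (-q) (q + m) m (by ring)).inv.app G₀ = b ≫ sᵢ⟦m⟧' := by
    rw [aux_key, hu, aux_real]
  have E1 := aux_key q m (g (-q) u) b
  rw [← E0, ← E1, aux_add'_inv_app (-q) (q + m) m (by ring) G₀,
    aux_add'_inv_app (-q) (q + m) m (by ring) X]
  have e1 : ((-q) + (q + m)) = m := by ring
  calc g m ((b ≫ (shiftFunctorAdd C q m).inv.app G) ≫ u⟦q + m⟧' ≫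
        ((shiftFunctorAdd C (-q) (q + m)).inv.app G₀ ≫ eqToHom (by rw [e1])))
      = g m (((b ≫ (shiftFunctorAdd C q m).inv.app G) ≫ u⟦q + m⟧' ≫
          (shiftFunctorAdd C (-q) (q + m)).inv.app G₀) ≫ eqToHom (by rw [e1])) := by
        simp only [Category.assoc]
    _ = g ((-q) + (q + m)) ((b ≫ (shiftFunctorAdd C q m).inv.app G) ≫ u⟦q + m⟧' ≫
          (shiftFunctorAdd C (-q) (q + m)).inv.app G₀) ≫ eqToHom (by rw [e1]) :=
        aux_cast (fun p => ⇑(g p)) _ m e1 _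
    _ = ((b ≫ (shiftFunctorAdd C q m).inv.app G) ≫ (g (-q) u)⟦q + m⟧' ≫
          (shiftFunctorAdd C (-q) (q + m)).inv.app X) ≫ eqToHom (by rw [e1]) := by
        rw [hg (-q) (q + m) (b ≫ (shiftFunctorAdd C q m).inv.app G) u]
    _ = (b ≫ (shiftFunctorAdd C q m).inv.app G) ≫ (g (-q) u)⟦q + m⟧' ≫
          ((shiftFunctorAdd C (-q) (q + m)).inv.app X ≫ eqToHom (by rw [e1])) := by
        simp only [Category.assoc]

end AuxShift

set_option linter.unusedSectionVars false in
lemma aux_final (G : C)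
    (hG : ∀ W : C, (∀ (p : ℤ) (u : G ⟶ W⟦p⟧), u = 0) → IsZero W)
    (X G₀ : C)
    (g : ∀ p : ℤ, (G ⟶ G₀⟦p⟧) →ₗ[k] (G ⟶ X⟦p⟧))
    (hbij : ∀ p : ℤ, Function.Bijective (g p))
    (φ : G₀ ⟶ X) (hφ : ∀ (m : ℤ) (u : G ⟶ G₀⟦m⟧), u ≫ φ⟦m⟧' = g m u) :
    Nonempty (X ≅ G₀) := by
  obtain ⟨Z, i₂, i₃, hT⟩ := Pretriangulated.distinguished_cocone_triangle φ
  have z31 : i₃ ≫ (φ⟦(1 : ℤ)⟧') = 0 := comp_distTriang_mor_zero₃₁ _ hT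
  have z12 : φ ≫ i₂ = 0 := comp_distTriang_mor_zero₁₂ _ hT
  have hZ : IsZero Z := by
    apply hG
    intro p w
    have hTp : (Triangle.shiftFunctor C p).obj (Triangle.mk φ i₂ i₃) ∈ distTriang C :=
      Triangle.shift_distinguished _ hT p
    have hc₂ : (w ≫ i₃⟦p⟧' ≫ (shiftFunctorComm C 1 p).hom.app G₀ ≫
        (shiftFunctorAdd C p 1).inv.app G₀ : G ⟶ G₀⟦p + 1⟧) = 0 := by
      apply (hbij (p + 1)).injective
      rw [map_zero, ← hφ]
      have nat1 := (shiftFunctorAdd C p 1).inv.naturality φ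
      dsimp at nat1
      have nat2 := (shiftFunctorComm C 1 p).hom.naturality φ
      dsimp at nat2
      have nat2' : ∀ {W : C} (h : X⟦p⟧⟦1⟧ ⟶ W),
          (shiftFunctorComm C 1 p).hom.app G₀ ≫
            (shiftFunctor C 1).map ((shiftFunctor C p).map φ) ≫ h =
          (shiftFunctor C p).map ((shiftFunctor C 1).map φ) ≫
            (shiftFunctorComm C 1 p).hom.app X ≫ h := by
        intro W h
        rw [← Category.assoc, ← nat2, Category.assoc]
      simp only [Category.assoc]
      rw [← nat1, nat2' ((shiftFunctorAdd C p 1).inv.app X),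
        ← Functor.map_comp_assoc, z31]
      simp
    have hcomm : w ≫ i₃⟦p⟧' ≫ (shiftFunctorComm C 1 p).hom.app G₀ = 0 := by
      have h2 := congrArg (· ≫ (shiftFunctorAdd C p 1).hom.app G₀) hc₂
      simpa using h2
    have hw3 : w ≫ ((Triangle.shiftFunctor C p).obj (Triangle.mk φ i₂ i₃)).mor₃ = 0 := by
      change w ≫ (p.negOnePow • (i₃⟦p⟧' ≫ (shiftFunctorComm C 1 p).hom.app G₀)) = 0
      rw [Linear.comp_units_smul, hcomm, smul_zero]
    obtain ⟨v, hv⟩ := Triangle.coyoneda_exact₃ _ hTp w hw3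
    obtain ⟨u, hu⟩ := (hbij p).surjective (p.negOnePow • v)
    have hw : w = (p.negOnePow • v) ≫ i₂⟦p⟧' := by
      rw [hv]
      change v ≫ (p.negOnePow • i₂⟦p⟧') = (p.negOnePow • v) ≫ i₂⟦p⟧'
      exact (Linear.comp_units_smul ..).trans (Linear.units_smul_comp ..).symm
    rw [hw, ← hu, ← hφ]
    change (u ≫ φ⟦p⟧') ≫ i₂⟦p⟧' = 0
    rw [Category.assoc, ← Functor.map_comp, z12]
    simp
  have : IsIso φ := (Triangle.isZero₃_iff_isIso₁ _ hT).1 hZ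
  exact ⟨(asIso φ).symm⟩

theorem stmt_7 (G : C)
    (hG : ∀ W : C, (∀ (p : ℤ) (u : G ⟶ W⟦p⟧), u = 0) → IsZero W)
    (X G₀ : C) (hG₀ : InAddShifts G G₀)
    (g : ∀ p : ℤ, (G ⟶ G₀⟦p⟧) →ₗ[k] (G ⟶ X⟦p⟧))
    (hg : IsGradedHomOver G G₀ X g)
    (hbij : ∀ p : ℤ, Function.Bijective (g p)) :
    Nonempty (X ≅ G₀) := by
  obtain ⟨n, ps, r, s, hrs⟩ := hG₀
  refine aux_final G hG X G₀ g hbij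
    (r ≫ biproduct.desc (fun i : Fin n =>
      (g (-ps i) ((shiftFunctorCompIsoId C (ps i) (-ps i) (add_neg_cancel _)).inv.app G ≫
        (biproduct.ι (fun j : Fin n => G⟦ps j⟧) i ≫ s)⟦-ps i⟧'))⟦ps i⟧' ≫
        (shiftFunctorCompIsoId C (-ps i) (ps i) (neg_add_cancel _)).hom.app X)) ?_
  intro m u
  have e1 : u ≫ (r ≫ biproduct.desc (fun i : Fin n =>
      (g (-ps i) ((shiftFunctorCompIsoId C (ps i) (-ps i) (add_neg_cancel _)).inv.app G ≫
        (biproduct.ι (fun j : Fin n => G⟦ps j⟧) i ≫ s)⟦-ps i⟧'))⟦ps i⟧' ≫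
        (shiftFunctorCompIsoId C (-ps i) (ps i) (neg_add_cancel _)).hom.app X))⟦m⟧' =
      ∑ i : Fin n, (u ≫ (r ≫ biproduct.π (fun j : Fin n => G⟦ps j⟧) i)⟦m⟧') ≫
        ((g (-ps i) ((shiftFunctorCompIsoId C (ps i) (-ps i) (add_neg_cancel _)).inv.app G ≫
          (biproduct.ι (fun j : Fin n => G⟦ps j⟧) i ≫ s)⟦-ps i⟧'))⟦ps i⟧' ≫
          (shiftFunctorCompIsoId C (-ps i) (ps i) (neg_add_cancel _)).hom.app X)⟦m⟧' := by
    rw [biproduct.desc_eq]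
    simp [Preadditive.comp_sum, Preadditive.sum_comp, Functor.map_sum, Functor.map_comp,
      Category.assoc]
  have e2 : u = ∑ i : Fin n, (u ≫ (r ≫ biproduct.π (fun j : Fin n => G⟦ps j⟧) i)⟦m⟧') ≫
      ((biproduct.ι (fun j : Fin n => G⟦ps j⟧) i ≫ s)⟦m⟧') := by
    have htot : ∑ i : Fin n, r ≫ biproduct.π (fun j : Fin n => G⟦ps j⟧) i ≫
        biproduct.ι (fun j : Fin n => G⟦ps j⟧) i ≫ s = 𝟙 G₀ := by
      have ht := biproduct.total (f := fun j : Fin n => G⟦ps j⟧)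
      calc ∑ i : Fin n, r ≫ biproduct.π (fun j : Fin n => G⟦ps j⟧) i ≫
            biproduct.ι (fun j : Fin n => G⟦ps j⟧) i ≫ s
          = r ≫ (∑ i : Fin n, biproduct.π (fun j : Fin n => G⟦ps j⟧) i ≫
              biproduct.ι (fun j : Fin n => G⟦ps j⟧) i) ≫ s := by
            rw [Preadditive.sum_comp, Preadditive.comp_sum]
            simp only [Category.assoc]
        _ = 𝟙 G₀ := by rw [ht, Category.id_comp, hrs]
    conv_lhs => rw [show u = u ≫ (𝟙 G₀ : G₀ ⟶ G₀)⟦m⟧' by simp, ← htot]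
    simp [Functor.map_sum, Preadditive.comp_sum, Functor.map_comp, Category.assoc]
  refine e1.trans ?_
  have e3 : g m u = ∑ i : Fin n,
      g m ((u ≫ (r ≫ biproduct.π (fun j : Fin n => G⟦ps j⟧) i)⟦m⟧') ≫
        ((biproduct.ι (fun j : Fin n => G⟦ps j⟧) i ≫ s)⟦m⟧')) := by
    conv_lhs => rw [e2]
    exact map_sum (g m) _ _
  refine Eq.trans ?_ e3.symm
  exact Finset.sum_congr rfl (fun i _ =>
    (aux_per G G₀ X g hg (ps i) m (biproduct.ι (fun j : Fin n => G⟦ps j⟧) i ≫ s)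
      (u ≫ (r ≫ biproduct.π (fun j : Fin n => G⟦ps j⟧) i)⟦m⟧')).symm)
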